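/- Let T_i : H → H be α_i-averaged with α_i ∈ (0,1), i = 1,2. Then the composition T_1 ∘ T_2 is α-averaged, where α = (α_1 + α_2 - 2α_1α_2)/(1 - α_1α_2) ∈ (0,1). -/

import Mathlib

/-- `R` is `α`-averaged if `R = (1-α) Id + α T` for some nonexpansive `T`. -/
def IsAveraged {H : Type*} [NormedAddCommGroup H] [InnerProductSpace ℝ H]
    (α : ℝ) (R : H → H) : Prop :=
  ∃ T : H → H, (∀ x y : H, ‖T x - T y‖ ≤ ‖x - y‖) ∧
    ∀ x : H, R x = (1 - α) • x + α • T x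

lemma averaged_ineq {H : Type*} [NormedAddCommGroup H] [InnerProductSpace ℝ H]
    {α : ℝ} (h0 : 0 < α) (h1 : α < 1) {R : H → H} (h : IsAveraged α R) (x y : H) :
    ‖R x - R y‖^2 + ((1-α)/α) * ‖(x - R x) - (y - R y)‖^2 ≤ ‖x - y‖^2 := by
  obtain ⟨S, hS, hR⟩ := h
  set a := x - y with ha
  set b := S x - S y with hb
  have e1 : R x - R y = (1-α) • a + α • b := by rw [hR x, hR y, ha, hb]; module
  have e2 : (x - R x) - (y - R y) = α • (a - b) := by rw [hR x, hR y, ha, hb]; module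
  have habs1 : ‖(1:ℝ) - α‖ = 1 - α := by rw [Real.norm_eq_abs, abs_of_pos]; linarith
  have habs2 : ‖α‖ = α := by rw [Real.norm_eq_abs, abs_of_pos h0]
  have E1 : ‖(1-α) • a + α • b‖^2
      = (1-α)^2*‖a‖^2 + 2*((1-α)*α)*(inner ℝ a b : ℝ) + α^2*‖b‖^2 := by
    rw [@norm_add_sq_real, norm_smul, norm_smul, real_inner_smul_left,
      real_inner_smul_right, habs1, habs2]
    ring
  have E2 : ‖α • (a - b)‖^2 = α^2 * (‖a‖^2 - 2*(inner ℝ a b : ℝ) + ‖b‖^2) := by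
    rw [norm_smul, habs2, mul_pow, @norm_sub_sq_real]
  have hdiv : (1-α)/α * α^2 = (1-α)*α := by field_simp
  have hBA : ‖b‖^2 ≤ ‖a‖^2 := by
    have := hS x y
    nlinarith [norm_nonneg a, norm_nonneg b]
  have hre : (1-α)/α * (α^2 * (‖a‖^2 - 2*(inner ℝ a b : ℝ) + ‖b‖^2))
      = (1-α)*α*(‖a‖^2 - 2*(inner ℝ a b : ℝ) + ‖b‖^2) := by
    rw [← mul_assoc, hdiv]
  rw [e1, e2, E1, E2, hre]
  nlinarith [mul_le_mul_of_nonneg_left hBA h0.le]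

lemma averaged_of_ineq {H : Type*} [NormedAddCommGroup H] [InnerProductSpace ℝ H]
    {α : ℝ} (h0 : 0 < α) (h1 : α < 1) {R : H → H}
    (h : ∀ x y : H, ‖R x - R y‖^2 + ((1-α)/α) * ‖(x - R x) - (y - R y)‖^2 ≤ ‖x - y‖^2) :
    IsAveraged α R := by
  refine ⟨fun x => α⁻¹ • (R x - (1-α) • x), fun x y => ?_, fun x => ?_⟩
  · show ‖α⁻¹ • (R x - (1 - α) • x) - α⁻¹ • (R y - (1 - α) • y)‖ ≤ ‖x - y‖
    set a := x - y with ha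
    set d := (x - R x) - (y - R y) with hd
    have hinv : α * α⁻¹ = 1 := mul_inv_cancel₀ h0.ne'
    have e0 : R x - R y = a - d := by rw [ha, hd]; abel
    have e : α • (α⁻¹ • (R x - (1-α) • x) - α⁻¹ • (R y - (1-α) • y)) = α • a - d := by
      rw [smul_sub, smul_smul, smul_smul, hinv, one_smul, one_smul, ha, hd]
      module
    have hn : α * ‖α⁻¹ • (R x - (1-α) • x) - α⁻¹ • (R y - (1-α) • y)‖ = ‖α • a - d‖ := by
      rw [← e, norm_smul, Real.norm_eq_abs, abs_of_pos h0]
    have hsq : ‖α • a - d‖^2 ≤ α^2 * ‖a‖^2 := by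
      have h' := h x y
      rw [e0] at h'
      have E1 : ‖a - d‖^2 = ‖a‖^2 - 2*(inner ℝ a d : ℝ) + ‖d‖^2 := by
        rw [@norm_sub_sq_real]
      have E2 : ‖α • a - d‖^2 = α^2*‖a‖^2 - 2*α*(inner ℝ a d : ℝ) + ‖d‖^2 := by
        rw [@norm_sub_sq_real, norm_smul, Real.norm_eq_abs, abs_of_pos h0,
          real_inner_smul_left]
        ring
      have hdd : ‖d‖^2 + ((1-α)/α)*‖d‖^2 = (1/α)*‖d‖^2 := by field_simp; ring
      have h2 : (1/α) * ‖d‖^2 ≤ 2*(inner ℝ a d : ℝ) := by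
        rw [E1] at h'; linarith
      have h3 : ‖d‖^2 ≤ 2*α*(inner ℝ a d : ℝ) := by
        have hmul := mul_le_mul_of_nonneg_left h2 h0.le
        calc ‖d‖^2 = α * ((1/α)*‖d‖^2) := by field_simp
        _ ≤ α * (2*(inner ℝ a d : ℝ)) := hmul
        _ = 2*α*(inner ℝ a d : ℝ) := by ring
      rw [E2]; linarith
    have hna : (0:ℝ) ≤ ‖a‖ := norm_nonneg _
    have hh : ‖α • a - d‖ ≤ α * ‖a‖ := by
      nlinarith [norm_nonneg (α • a - d), mul_nonneg h0.le hna]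
    calc ‖α⁻¹ • (R x - (1-α) • x) - α⁻¹ • (R y - (1-α) • y)‖
        = α⁻¹ * (α * ‖α⁻¹ • (R x - (1-α) • x) - α⁻¹ • (R y - (1-α) • y)‖) := by
          rw [← mul_assoc, inv_mul_cancel₀ h0.ne', one_mul]
      _ = α⁻¹ * ‖α • a - d‖ := by rw [hn]
      _ ≤ α⁻¹ * (α * ‖a‖) := mul_le_mul_of_nonneg_left hh (inv_nonneg.2 h0.le)
      _ = ‖a‖ := by rw [← mul_assoc, inv_mul_cancel₀ h0.ne', one_mul]
  · show R x = (1 - α) • x + α • α⁻¹ • (R x - (1 - α) • x)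
    rw [smul_smul, mul_inv_cancel₀ h0.ne', one_smul]
    abel

/-- Composition of an `α₁`-averaged and an `α₂`-averaged operator is
`α`-averaged with `α = (α₁ + α₂ - 2α₁α₂)/(1 - α₁α₂) ∈ (0,1)`. -/
theorem comp_averaged
    {H : Type*} [NormedAddCommGroup H] [InnerProductSpace ℝ H] [CompleteSpace H]
    (α₁ α₂ : ℝ) (hα₁ : α₁ ∈ Set.Ioo (0 : ℝ) 1) (hα₂ : α₂ ∈ Set.Ioo (0 : ℝ) 1)
    (T₁ T₂ : H → H) (h₁ : IsAveraged α₁ T₁) (h₂ : IsAveraged α₂ T₂) :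
    (α₁ + α₂ - 2 * α₁ * α₂) / (1 - α₁ * α₂) ∈ Set.Ioo (0 : ℝ) 1 ∧
      IsAveraged ((α₁ + α₂ - 2 * α₁ * α₂) / (1 - α₁ * α₂)) (T₁ ∘ T₂) := by
  obtain ⟨hα₁0, hα₁1⟩ := hα₁
  obtain ⟨hα₂0, hα₂1⟩ := hα₂
  have hD : 0 < 1 - α₁ * α₂ := by nlinarith
  have hN : 0 < α₁ + α₂ - 2 * α₁ * α₂ := by nlinarith
  have hmem : (α₁ + α₂ - 2 * α₁ * α₂) / (1 - α₁ * α₂) ∈ Set.Ioo (0 : ℝ) 1 :=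
    ⟨div_pos hN hD, (div_lt_one hD).2 (by nlinarith)⟩
  refine ⟨hmem, averaged_of_ineq hmem.1 hmem.2 fun x y => ?_⟩
  have H1 := averaged_ineq hα₁0 hα₁1 h₁ (T₂ x) (T₂ y)
  have H2 := averaged_ineq hα₂0 hα₂1 h₂ x y
  have hκ : (1 - (α₁ + α₂ - 2*α₁*α₂)/(1 - α₁*α₂))/((α₁ + α₂ - 2*α₁*α₂)/(1 - α₁*α₂))
      = (1-α₁)*(1-α₂)/(α₁ + α₂ - 2*α₁*α₂) := by
    field_simp
    ring
  have hκ0 : 0 ≤ (1-α₁)*(1-α₂)/(α₁ + α₂ - 2*α₁*α₂) :=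
    div_nonneg (by nlinarith) hN.le
  have hsum : x - (T₁ ∘ T₂) x - (y - (T₁ ∘ T₂) y)
      = ((x - T₂ x) - (y - T₂ y)) + ((T₂ x - T₁ (T₂ x)) - (T₂ y - T₁ (T₂ y))) := by
    simp only [Function.comp_apply]
    abel
  have htri : ‖((x - T₂ x) - (y - T₂ y)) + ((T₂ x - T₁ (T₂ x)) - (T₂ y - T₁ (T₂ y)))‖
      ≤ ‖(x - T₂ x) - (y - T₂ y)‖ + ‖(T₂ x - T₁ (T₂ x)) - (T₂ y - T₁ (T₂ y))‖ :=
    norm_add_le _ _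
  set a := ‖(x - T₂ x) - (y - T₂ y)‖ with hadef
  set b := ‖(T₂ x - T₁ (T₂ x)) - (T₂ y - T₁ (T₂ y))‖ with hbdef
  have ha0 : 0 ≤ a := norm_nonneg _
  have hb0 : 0 ≤ b := norm_nonneg _
  have hW : ‖((x - T₂ x) - (y - T₂ y)) + ((T₂ x - T₁ (T₂ x)) - (T₂ y - T₁ (T₂ y)))‖^2
      ≤ (a + b)^2 := by
    nlinarith [norm_nonneg (((x - T₂ x) - (y - T₂ y)) + ((T₂ x - T₁ (T₂ x)) - (T₂ y - T₁ (T₂ y))))]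
  have key : (1-α₁)*(1-α₂)/(α₁ + α₂ - 2*α₁*α₂) * (a + b)^2
      ≤ (1-α₂)/α₂ * a^2 + (1-α₁)/α₁ * b^2 := by
    have e : (1-α₂)/α₂ * a^2 + (1-α₁)/α₁ * b^2
        - (1-α₁)*(1-α₂)/(α₁ + α₂ - 2*α₁*α₂) * (a + b)^2
        = (α₁*(1-α₂)*a - α₂*(1-α₁)*b)^2 / (α₁*α₂*(α₁ + α₂ - 2*α₁*α₂)) := by
      have hNne : α₁ + α₂ - 2*α₁*α₂ ≠ 0 := hN.ne'
      simp only [div_mul_eq_mul_div]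
      rw [div_add_div _ _ hα₂0.ne' hα₁0.ne',
        div_sub_div _ _ (mul_ne_zero hα₂0.ne' hα₁0.ne') hNne,
        div_eq_div_iff (mul_ne_zero (mul_ne_zero hα₂0.ne' hα₁0.ne') hNne)
          (mul_ne_zero (mul_ne_zero hα₁0.ne' hα₂0.ne') hNne)]
      ring
    have e2 : 0 ≤ (α₁*(1-α₂)*a - α₂*(1-α₁)*b)^2 / (α₁*α₂*(α₁ + α₂ - 2*α₁*α₂)) :=
      div_nonneg (sq_nonneg _) (by positivity)
    linarith [e ▸ e2]
  simp only [Function.comp_apply] at hsum ⊢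
  rw [hκ, hsum]
  have hmul := mul_le_mul_of_nonneg_left hW hκ0
  linarith [H1, H2, hmul, key]
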